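/- For every finite alphabet A, the free inverse monoid 𝓘(A) generated by A is pre-rational. -/

import Mathlib

open List


/-- A monoid `M` is *pre-rational* if for every finite alphabet `A`, every monoid
homomorphism `μ` from the free monoid `A*` to `M`, and every `m ∈ M`, the language
`μ⁻¹(m) ⊆ A*` is regular. -/
def IsPreRational (M : Type*) [Monoid M] : Prop :=
  ∀ (A : Type) (_ : Fintype A) (μ : FreeMonoid A →* M) (m : M),
    Language.IsRegular {w : List A | μ (FreeMonoid.ofList w) = m}

/-- The involution `†` on words over `A ∪ Ā` — here the alphabet is `A ⊕ A`, where `inl a`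
stands for the letter `a` and `inr a` for its barred copy `ā` — reversing the word and
swapping barred and unbarred letters. It satisfies the inductive equations `ε† = ε`,
`(u·a)† = ā·u†` and `(u·ā)† = a·u†`. -/
def fimDag {A : Type} (w : FreeMonoid (A ⊕ A)) : FreeMonoid (A ⊕ A) :=
  FreeMonoid.ofList (((FreeMonoid.toList w).reverse).map (Sum.elim Sum.inr Sum.inl))

/-- The defining relations of the free inverse monoid: `x` and `x†` are pseudo-inverses
(`x·x†·x = x` and `x†·x·x† = x†`), and idempotent elements commute
(`x·x†·y·y† = y·y†·x·x†`). -/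
def fimRel (A : Type) : FreeMonoid (A ⊕ A) → FreeMonoid (A ⊕ A) → Prop := fun u v =>
  (∃ x, u = x * fimDag x * x ∧ v = x) ∨
  (∃ x, u = fimDag x * x * fimDag x ∧ v = fimDag x) ∨
  (∃ x y, u = x * fimDag x * (y * fimDag y) ∧ v = y * fimDag y * (x * fimDag x))

/-- The free inverse monoid `𝓘(A)` generated by `A`: the quotient of the free monoid over
`A ∪ Ā` by the smallest monoid congruence containing the defining relations. -/
abbrev FreeInverseMonoid (A : Type) : Type := (conGen (fimRel A)).Quotient

namespace FimProof

open scoped Classical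

variable {A : Type}

def bar : A ⊕ A → A ⊕ A := Sum.elim Sum.inr Sum.inl

@[simp] lemma bar_bar (x : A ⊕ A) : bar (bar x) = x := by cases x <;> rfl

def dg (w : List (A ⊕ A)) : List (A ⊕ A) := (w.reverse).map bar

@[simp] lemma dg_nil : dg ([] : List (A ⊕ A)) = [] := rfl

lemma dg_append (u v : List (A ⊕ A)) : dg (u ++ v) = dg v ++ dg u := by
  simp [dg]

@[simp] lemma dg_dg (w : List (A ⊕ A)) : dg (dg w) = w := by
  simp [dg, List.map_reverse, Function.comp_def]

lemma dg_singleton (a : A ⊕ A) : dg [a] = [bar a] := rfl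

lemma dg_concat (w : List (A ⊕ A)) (a : A ⊕ A) : dg (w ++ [a]) = bar a :: dg w := by
  simp [dg_append, dg_singleton]

def Red (w : List (A ⊕ A)) : Prop := w.Chain' (fun a b => b ≠ bar a)

lemma red_nil : Red ([] : List (A ⊕ A)) := List.isChain_nil

noncomputable def rS (L : List (A ⊕ A)) (x : A ⊕ A) : List (A ⊕ A) :=
  if L.getLast? = some (bar x) then L.dropLast else L ++ [x]

lemma red_rS {L : List (A ⊕ A)} (h : Red L) (x : A ⊕ A) : Red (rS L x) := by
  unfold rS
  split
  · exact h.prefix (List.dropLast_prefix L)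
  · rename_i hL
    rw [Red]
    show List.IsChain _ _
    rw [List.isChain_append]
    refine ⟨h, List.isChain_singleton _, ?_⟩
    rintro c hc y hy
    simp at hy
    subst hy
    intro hxy
    apply hL
    rw [Option.mem_def] at hc
    rw [hxy, bar_bar]
    exact hc

lemma rS_rS_bar {L : List (A ⊕ A)} (h : Red L) (x : A ⊕ A) :
    rS (rS L x) (bar x) = L := by
  by_cases hc : L.getLast? = some (bar x)
  · have hL : L ≠ [] := by rintro rfl; simp at hc
    have hdec : L = L.dropLast ++ [bar x] := by
      conv_lhs => rw [← List.dropLast_append_getLast hL]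
      rw [List.getLast?_eq_getLast hL] at hc
      simp at hc
      rw [hc]
    have hnot : L.dropLast.getLast? ≠ some (bar (bar x)) := by
      rw [bar_bar]
      intro hx
      have hL' : L.dropLast ≠ [] := by rintro h'; rw [h'] at hx; simp at hx
      rw [List.getLast?_eq_getLast hL'] at hx
      have := h
      rw [Red] at this
      conv at this => rw [hdec]
      change List.IsChain _ _ at this
      rw [List.isChain_append] at this
      obtain ⟨_, _, h3⟩ := this
      have := h3 (L.dropLast.getLast hL')
        (by simp [List.getLast?_eq_getLast hL']) (bar x) rfl
      simp at hx
      rw [hx] at this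
      exact this rfl
    have h1 : rS L x = L.dropLast := by rw [rS, if_pos hc]
    rw [h1, rS, if_neg hnot]
    exact hdec.symm
  · have h1 : rS L x = L ++ [x] := by rw [rS, if_neg hc]
    rw [h1, rS, if_pos (by simp), List.dropLast_concat]


noncomputable def fold (L : List (A ⊕ A)) (w : List (A ⊕ A)) : List (A ⊕ A) :=
  w.foldl rS L

@[simp] lemma fold_nil (L : List (A ⊕ A)) : fold L [] = L := rfl

lemma fold_append (L u v : List (A ⊕ A)) : fold L (u ++ v) = fold (fold L u) v := by
  simp [fold, List.foldl_append]

lemma fold_cons (L : List (A ⊕ A)) (x : A ⊕ A) (w : List (A ⊕ A)) :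
    fold L (x :: w) = fold (rS L x) w := rfl

lemma fold_concat (L : List (A ⊕ A)) (w : List (A ⊕ A)) (x : A ⊕ A) :
    fold L (w ++ [x]) = rS (fold L w) x := by
  simp [fold_append, fold]

lemma red_fold {L : List (A ⊕ A)} (h : Red L) (w : List (A ⊕ A)) : Red (fold L w) := by
  induction w generalizing L with
  | nil => exact h
  | cons x w ih => exact ih (red_rS h x)

lemma fold_dg {L : List (A ⊕ A)} (h : Red L) (w : List (A ⊕ A)) :
    fold (fold L w) (dg w) = L := by
  induction w using List.reverseRecOn with
  | nil => simp
  | append_singleton w a ih =>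
    rw [dg_concat, fold_concat, fold_cons, rS_rS_bar (red_fold h w) a]
    exact ih

noncomputable def V : List (A ⊕ A) → List (A ⊕ A) → Finset (List (A ⊕ A))
  | _, [] => ∅
  | L, x :: w => insert (rS L x) (V (rS L x) w)

@[simp] lemma V_nil (L : List (A ⊕ A)) : V L [] = ∅ := rfl

lemma V_cons (L : List (A ⊕ A)) (x : A ⊕ A) (w : List (A ⊕ A)) :
    V L (x :: w) = insert (rS L x) (V (rS L x) w) := rfl

lemma V_append (L u v : List (A ⊕ A)) : V L (u ++ v) = V L u ∪ V (fold L u) v := by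
  induction u generalizing L with
  | nil => simp
  | cons x u ih =>
    simp only [List.cons_append, V_cons, ih, fold_cons, Finset.insert_union]

lemma fold_mem_V (L : List (A ⊕ A)) {w : List (A ⊕ A)} (hw : w ≠ []) :
    fold L w ∈ V L w := by
  induction w generalizing L with
  | nil => exact absurd rfl hw
  | cons x w ih =>
    rw [V_cons, fold_cons]
    rcases eq_or_ne w [] with rfl | hw'
    · simp
    · exact Finset.mem_insert_of_mem (ih _ hw')

lemma fold_mem_insert (L : List (A ⊕ A)) (w : List (A ⊕ A)) :
    fold L w ∈ insert L (V L w) := by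
  rcases eq_or_ne w [] with rfl | hw
  · simp
  · exact Finset.mem_insert_of_mem (fold_mem_V L hw)

lemma V_dg_subset {L : List (A ⊕ A)} (h : Red L) (w : List (A ⊕ A)) :
    V (fold L w) (dg w) ⊆ insert L (V L w) := by
  induction w using List.reverseRecOn with
  | nil => simp
  | append_singleton w a ih =>
    rw [dg_concat, V_cons, fold_concat, rS_rS_bar (red_fold h w) a]
    intro z hz
    rcases Finset.mem_insert.mp hz with h1 | hz
    · rw [h1]
      rcases Finset.mem_insert.mp (fold_mem_insert L w) with h' | h'
      · rw [h']; exact Finset.mem_insert_self _ _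
      · exact Finset.mem_insert_of_mem (by rw [V_append]; exact Finset.mem_union_left _ h')
    · rcases Finset.mem_insert.mp (ih hz) with h1 | h'
      · rw [h1]; exact Finset.mem_insert_self _ _
      · exact Finset.mem_insert_of_mem (by rw [V_append]; exact Finset.mem_union_left _ h')

noncomputable def stepS (s : Finset (List (A ⊕ A)) × List (A ⊕ A)) (x : A ⊕ A) :
    Finset (List (A ⊕ A)) × List (A ⊕ A) :=
  (insert (rS s.2 x) s.1, rS s.2 x)

noncomputable def foldS (s : Finset (List (A ⊕ A)) × List (A ⊕ A)) (w : List (A ⊕ A)) :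
    Finset (List (A ⊕ A)) × List (A ⊕ A) :=
  w.foldl stepS s

lemma foldS_append (s : Finset (List (A ⊕ A)) × List (A ⊕ A)) (u v : List (A ⊕ A)) :
    foldS s (u ++ v) = foldS (foldS s u) v := by
  simp [foldS, List.foldl_append]

lemma foldS_eq (S : Finset (List (A ⊕ A))) (L : List (A ⊕ A)) (w : List (A ⊕ A)) :
    foldS (S, L) w = (S ∪ V L w, fold L w) := by
  induction w generalizing S L with
  | nil => simp [foldS]
  | cons x w ih =>
    have : foldS (S, L) (x :: w) = foldS (insert (rS L x) S, rS L x) w := rfl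
    rw [this, ih, V_cons, fold_cons]
    ext1
    · simp [Finset.insert_union, Finset.union_insert]
    · rfl


lemma toList_fimDag (x : FreeMonoid (A ⊕ A)) :
    FreeMonoid.toList (fimDag x) = dg (FreeMonoid.toList x) := rfl

def Inva (u v : List (A ⊕ A)) : Prop :=
  ∀ S L, Red L → L ∈ S → foldS (S, L) u = foldS (S, L) v

lemma fold_mem_union {S : Finset (List (A ⊕ A))} {L : List (A ⊕ A)} (hS : L ∈ S)
    (b : List (A ⊕ A)) : fold L b ∈ S ∪ V L b := by
  rcases Finset.mem_insert.mp (fold_mem_insert L b) with h | h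
  · rw [h]; exact Finset.mem_union_left _ hS
  · exact Finset.mem_union_right _ h

lemma inva_mul {a b c d : List (A ⊕ A)} (h1 : Inva a b) (h2 : Inva c d) :
    Inva (a ++ c) (b ++ d) := by
  intro S L hL hS
  rw [foldS_append, foldS_append, h1 S L hL hS, foldS_eq S L b]
  exact h2 _ _ (red_fold hL b) (fold_mem_union hS b)

lemma V_dg_subset' {S : Finset (List (A ⊕ A))} {L : List (A ⊕ A)} (hL : Red L) (hS : L ∈ S)
    (x : List (A ⊕ A)) : V (fold L x) (dg x) ⊆ S ∪ V L x := by
  intro z hz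
  rcases Finset.mem_insert.mp (V_dg_subset hL x hz) with h | h
  · rw [h]; exact Finset.mem_union_left _ hS
  · exact Finset.mem_union_right _ h

lemma inva_rel1 (x : List (A ⊕ A)) : Inva (x ++ dg x ++ x) x := by
  intro S L hL hS
  rw [foldS_eq, foldS_eq, Prod.mk.injEq]
  have hfd : fold L (x ++ dg x) = L := by
    rw [fold_append]; exact fold_dg hL x
  constructor
  · rw [V_append, V_append, hfd]
    have h1 := V_dg_subset' hL hS x
    ext z
    simp only [Finset.mem_union]
    constructor
    · rintro (h | ((h | h) | h))
      · exact Or.inl h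
      · exact Or.inr h
      · exact Finset.mem_union.mp (h1 h)
      · exact Or.inr h
    · rintro (h | h)
      · exact Or.inl h
      · exact Or.inr (Or.inl (Or.inl h))
  · rw [fold_append, hfd]

lemma inva_rel2 (x : List (A ⊕ A)) : Inva (dg x ++ x ++ dg x) (dg x) := by
  intro S L hL hS
  rw [foldS_eq, foldS_eq, Prod.mk.injEq]
  have hfd : fold L (dg x ++ x) = L := by
    rw [fold_append]
    have := fold_dg hL (dg x)
    rwa [dg_dg] at this
  have h1 : V (fold L (dg x)) x ⊆ S ∪ V L (dg x) := by
    have := V_dg_subset' hL hS (dg x)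
    rwa [dg_dg] at this
  constructor
  · rw [V_append, V_append, hfd]
    ext z
    simp only [Finset.mem_union]
    constructor
    · rintro (h | ((h | h) | h))
      · exact Or.inl h
      · exact Or.inr h
      · exact Finset.mem_union.mp (h1 h)
      · exact Or.inr h
    · rintro (h | h)
      · exact Or.inl h
      · exact Or.inr (Or.inl (Or.inl h))
  · rw [fold_append, hfd]

lemma inva_rel3 (x y : List (A ⊕ A)) :
    Inva (x ++ dg x ++ (y ++ dg y)) (y ++ dg y ++ (x ++ dg x)) := by
  intro S L hL hS
  rw [foldS_eq, foldS_eq, Prod.mk.injEq]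
  have hx : fold L (x ++ dg x) = L := by rw [fold_append]; exact fold_dg hL x
  have hy : fold L (y ++ dg y) = L := by rw [fold_append]; exact fold_dg hL y
  constructor
  · rw [V_append L (x ++ dg x) (y ++ dg y), V_append L (y ++ dg y) (x ++ dg x), hx, hy,
      Finset.union_comm (V L (x ++ dg x))]
  · rw [fold_append L (x ++ dg x) (y ++ dg y), fold_append L (y ++ dg y) (x ++ dg x), hx, hy]
    exact hx.symm

noncomputable def cInv (A : Type) : Con (FreeMonoid (A ⊕ A)) :=
  { r := fun u v => Inva (FreeMonoid.toList u) (FreeMonoid.toList v)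
    iseqv := ⟨fun _ _ _ _ _ => rfl,
      fun h S L hL hS => (h S L hL hS).symm,
      fun h1 h2 S L hL hS => (h1 S L hL hS).trans (h2 S L hL hS)⟩
    mul' := fun h1 h2 => inva_mul h1 h2 }

lemma conGen_le_cInv (A : Type) : conGen (fimRel A) ≤ cInv A := by
  apply Con.conGen_le.mpr
  rintro u v h
  rcases h with ⟨x, hu, hv⟩ | ⟨x, hu, hv⟩ | ⟨x, y, hu, hv⟩
  · rw [hu, hv]; exact inva_rel1 (FreeMonoid.toList x)
  · rw [hu, hv]; exact inva_rel2 (FreeMonoid.toList x)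
  · rw [hu, hv]; exact inva_rel3 (FreeMonoid.toList x) (FreeMonoid.toList y)

theorem foldS_eq_of_con {A : Type} {u v : FreeMonoid (A ⊕ A)}
    (h : (conGen (fimRel A)) u v) :
    foldS ({[]}, []) (FreeMonoid.toList u) = foldS ({[]}, []) (FreeMonoid.toList v) :=
  conGen_le_cInv A h _ _ red_nil (Finset.mem_singleton_self _)


noncomputable def qL (w : List (A ⊕ A)) : FreeInverseMonoid A :=
  (FreeMonoid.ofList w : (conGen (fimRel A)).Quotient)

lemma fimDag_ofList (w : List (A ⊕ A)) :
    fimDag (FreeMonoid.ofList w) = FreeMonoid.ofList (dg w) := rfl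

lemma qL_append (u v : List (A ⊕ A)) : qL (u ++ v) = qL u * qL v := by
  rw [qL, qL, qL, FreeMonoid.ofList_append, Con.coe_mul]

@[simp] lemma qL_nil : qL ([] : List (A ⊕ A)) = 1 := rfl

lemma qL_rel1 (x : List (A ⊕ A)) : qL x * qL (dg x) * qL x = qL x := by
  have h : (conGen (fimRel A))
      (FreeMonoid.ofList x * fimDag (FreeMonoid.ofList x) * FreeMonoid.ofList x)
      (FreeMonoid.ofList x) :=
    ConGen.Rel.of _ _ (Or.inl ⟨_, rfl, rfl⟩)
  have h2 := (Con.eq _).mpr h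
  rw [Con.coe_mul, Con.coe_mul, fimDag_ofList] at h2
  exact h2

lemma qL_rel3 (x y : List (A ⊕ A)) :
    qL x * qL (dg x) * (qL y * qL (dg y)) = qL y * qL (dg y) * (qL x * qL (dg x)) := by
  have h : (conGen (fimRel A))
      (FreeMonoid.ofList x * fimDag (FreeMonoid.ofList x) *
        (FreeMonoid.ofList y * fimDag (FreeMonoid.ofList y)))
      (FreeMonoid.ofList y * fimDag (FreeMonoid.ofList y) *
        (FreeMonoid.ofList x * fimDag (FreeMonoid.ofList x))) :=
    ConGen.Rel.of _ _ (Or.inr (Or.inr ⟨_, _, rfl, rfl⟩))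
  have h2 := (Con.eq _).mpr h
  simp only [Con.coe_mul, fimDag_ofList] at h2
  exact h2

noncomputable def eI (w : List (A ⊕ A)) : FreeInverseMonoid A := qL w * qL (dg w)

lemma eI_comm (u v : List (A ⊕ A)) : Commute (eI u) (eI v) := by
  unfold Commute SemiconjBy eI
  simp only [mul_assoc]
  simpa only [mul_assoc] using qL_rel3 u v

lemma eI_mul_qL (w : List (A ⊕ A)) : eI w * qL w = qL w := by
  rw [eI, qL_rel1]

lemma eI_mul_eI (w : List (A ⊕ A)) : eI w * eI w = eI w := by
  nth_rewrite 2 [eI]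
  rw [← mul_assoc, eI_mul_qL, eI]

lemma qL_conj (a w : List (A ⊕ A)) : qL a * eI w = eI (a ++ w) * qL a := by
  have hdga : qL (dg a) * qL a = eI (dg a) := by rw [eI, dg_dg]
  have key : eI (a ++ w) * qL a = qL a * (eI w * eI (dg a)) := by
    rw [eI, dg_append, qL_append, qL_append, eI, ← hdga]
    simp only [mul_assoc]
  have h2 : qL a * eI (dg a) = qL a := by
    rw [← hdga, ← mul_assoc, qL_rel1]
  rw [key, (eI_comm w (dg a)).eq, ← mul_assoc, h2]

noncomputable def TQ (E : Finset (List (A ⊕ A))) : FreeInverseMonoid A :=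
  E.noncommProd eI (fun u _ v _ _ => eI_comm u v)

lemma TQ_commute_eI (E : Finset (List (A ⊕ A))) (w : List (A ⊕ A)) :
    Commute (eI w) (TQ E) :=
  Finset.noncommProd_commute _ _ _ _ (fun u _ => eI_comm w u)

lemma TQ_absorb {E : Finset (List (A ⊕ A))} {g : List (A ⊕ A)} (hg : g ∈ E) :
    TQ E * eI g = TQ E := by
  rw [TQ, ← Finset.noncommProd_erase_mul E hg eI (fun u _ v _ _ => eI_comm u v),
    mul_assoc, eI_mul_eI]

lemma TQ_insert_mul_qL (E : Finset (List (A ⊕ A))) (h : List (A ⊕ A)) :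
    TQ (insert h E) * qL h = TQ E * qL h := by
  by_cases hh : h ∈ E
  · rw [Finset.insert_eq_self.mpr hh]
  · rw [show TQ (insert h E) = eI h * TQ E from Finset.noncommProd_insert_of_notMem _ _ _ _ hh,
      (TQ_commute_eI E h).eq, mul_assoc, eI_mul_qL]

lemma decomp {α : Type*} {L : List α} {y : α} (hc : L.getLast? = some y) :
    L = L.dropLast ++ [y] := by
  have hL : L ≠ [] := by rintro rfl; simp at hc
  conv_lhs => rw [← List.dropLast_append_getLast hL]
  rw [List.getLast?_eq_getLast hL] at hc
  simp only [Option.some.injEq] at hc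
  rw [hc]

lemma foldS_inv {S : Finset (List (A ⊕ A))} {L : List (A ⊕ A)} (hL : Red L) (hS : L ∈ S)
    (w : List (A ⊕ A)) :
    Red (foldS (S, L) w).2 ∧ (foldS (S, L) w).2 ∈ (foldS (S, L) w).1 := by
  rw [foldS_eq]
  exact ⟨red_fold hL w, fold_mem_union hS w⟩

theorem nf (w : List (A ⊕ A)) :
    qL w = TQ (foldS ({[]}, []) w).1 * qL (foldS ({[]}, []) w).2 := by
  induction w using List.reverseRecOn with
  | nil =>
    show qL [] = TQ {[]} * qL []
    rw [qL_nil, TQ, Finset.noncommProd_singleton, mul_one]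
    show (1 : FreeInverseMonoid A) = eI []
    rw [eI, dg_nil, qL_nil, mul_one]
  | append_singleton w x ih =>
    obtain ⟨hred, hmem⟩ := foldS_inv (S := {[]}) red_nil (Finset.mem_singleton_self []) w
    set s := foldS ({[]}, []) w with hs
    have hstep : foldS ({[]}, []) (w ++ [x]) = (insert (rS s.2 x) s.1, rS s.2 x) := by
      rw [foldS_append]
      rfl
    rw [hstep, qL_append, ih, mul_assoc]
    show TQ s.1 * (qL s.2 * qL [x]) = TQ (insert (rS s.2 x) s.1) * qL (rS s.2 x)
    rw [TQ_insert_mul_qL]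
    by_cases hc : s.2.getLast? = some (bar x)
    · have hrs : rS s.2 x = s.2.dropLast := by rw [rS, if_pos hc]
      have hg : s.2 = s.2.dropLast ++ [bar x] := decomp hc
      have hx : qL s.2 * qL [x] = eI s.2 * qL s.2.dropLast := by
        conv_lhs => rw [hg]
        rw [qL_append, mul_assoc]
        have : qL [bar x] * qL [x] = eI [bar x] := by
          rw [eI, dg_singleton, bar_bar]
        rw [this, qL_conj, ← hg]
      rw [hx, hrs, ← mul_assoc, TQ_absorb hmem]
    · have hrs : rS s.2 x = s.2 ++ [x] := by rw [rS, if_neg hc]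
      rw [hrs, qL_append]

theorem qL_eq_iff {u v : List (A ⊕ A)} :
    qL u = qL v ↔ foldS ({[]}, []) u = foldS ({[]}, []) v := by
  constructor
  · intro h
    have hcon : (conGen (fimRel A)) (FreeMonoid.ofList u) (FreeMonoid.ofList v) :=
      (Con.eq _).mp h
    exact foldS_eq_of_con hcon
  · intro h
    rw [nf u, nf v, h]

lemma mk'_eq_qL (u : FreeMonoid (A ⊕ A)) :
    (conGen (fimRel A)).mk' u = qL (FreeMonoid.toList u) := rfl

theorem pref_finite (m : FreeInverseMonoid A) :
    {p : FreeInverseMonoid A | ∃ p', p * p' = m}.Finite := by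
  obtain ⟨w₀, hw₀⟩ := Con.mk'_surjective (c := conGen (fimRel A)) m
  set s₀ := foldS ({[]}, []) (FreeMonoid.toList w₀) with hs₀
  apply Set.Finite.subset
    ((s₀.1.powerset ×ˢ s₀.1).finite_toSet.image
      (fun s : Finset (List (A ⊕ A)) × List (A ⊕ A) => TQ s.1 * qL s.2))
  rintro p ⟨p', hp⟩
  obtain ⟨u, rfl⟩ := Con.mk'_surjective (c := conGen (fimRel A)) p
  obtain ⟨v, rfl⟩ := Con.mk'_surjective (c := conGen (fimRel A)) p'
  have h1 : qL (FreeMonoid.toList u ++ FreeMonoid.toList v) = qL (FreeMonoid.toList w₀) := by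
    rw [qL_append, ← mk'_eq_qL, ← mk'_eq_qL, ← mk'_eq_qL, hp, hw₀]
  have h2 := qL_eq_iff.mp h1
  rw [foldS_append] at h2
  set s := foldS ({[]}, []) (FreeMonoid.toList u) with hsu
  obtain ⟨hred, hmem⟩ := foldS_inv (S := {[]}) red_nil (Finset.mem_singleton_self [])
    (FreeMonoid.toList u)
  rw [← hsu] at hred hmem
  have h3 : foldS s (FreeMonoid.toList v) = (s.1 ∪ V s.2 (FreeMonoid.toList v),
      fold s.2 (FreeMonoid.toList v)) := foldS_eq s.1 s.2 (FreeMonoid.toList v)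
  rw [h3] at h2
  rw [← hs₀] at h2
  have hsub : s.1 ⊆ s₀.1 := by
    rw [← h2]
    exact Finset.subset_union_left
  refine ⟨s, ?_, ?_⟩
  · rw [Finset.mem_coe, Finset.mem_product, Finset.mem_powerset]
    exact ⟨hsub, hsub hmem⟩
  · rw [mk'_eq_qL, nf (FreeMonoid.toList u), ← hsu]

end FimProof

open FimProof

theorem freeInverseMonoid_isPreRational (A : Type) [Fintype A] :
    IsPreRational (FreeInverseMonoid A) := by
  intro B _ μ m
  classical
  set P : Set (FreeInverseMonoid A) := {p | ∃ p', p * p' = m} with hP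
  have hPfin : P.Finite := pref_finite m
  haveI : Fintype P := hPfin.fintype
  have hone : (1 : FreeInverseMonoid A) ∈ P := ⟨m, one_mul m⟩
  have hm : m ∈ P := ⟨1, mul_one m⟩
  let M : DFA B (Option P) :=
    { step := fun s b => s.bind fun p =>
        if h : (p : FreeInverseMonoid A) * μ (FreeMonoid.of b) ∈ P then some ⟨_, h⟩ else none
      start := some ⟨1, hone⟩
      accept := {s | s = some ⟨m, hm⟩} }
  have run : ∀ w : List B, M.evalFrom M.start w =
      if h : μ (FreeMonoid.ofList w) ∈ P then some ⟨_, h⟩ else none := by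
    intro w
    induction w using List.reverseRecOn with
    | nil =>
      have h1 : μ (FreeMonoid.ofList ([] : List B)) = 1 := map_one μ
      rw [dif_pos (show μ (FreeMonoid.ofList ([] : List B)) ∈ P from h1 ▸ hone)]
      have h0 : M.evalFrom M.start [] = some ⟨1, hone⟩ := rfl
      rw [h0]
      exact congrArg some (Subtype.ext h1.symm)
    | append_singleton w b ih =>
      rw [DFA.evalFrom_append_singleton, ih]
      have hmul : μ (FreeMonoid.ofList (w ++ [b]))
          = μ (FreeMonoid.ofList w) * μ (FreeMonoid.of b) := by
        rw [FreeMonoid.ofList_append, map_mul, FreeMonoid.ofList_singleton]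
      by_cases hw : μ (FreeMonoid.ofList w) ∈ P
      · rw [dif_pos hw]
        have hstep : M.step (some ⟨μ (FreeMonoid.ofList w), hw⟩) b =
            if h : μ (FreeMonoid.ofList w) * μ (FreeMonoid.of b) ∈ P
            then some ⟨μ (FreeMonoid.ofList w) * μ (FreeMonoid.of b), h⟩ else none := rfl
        rw [hstep]
        by_cases h2 : μ (FreeMonoid.ofList w) * μ (FreeMonoid.of b) ∈ P
        · rw [dif_pos h2, dif_pos (show μ (FreeMonoid.ofList (w ++ [b])) ∈ P from hmul ▸ h2)]
          exact congrArg some (Subtype.ext hmul.symm)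
        · rw [dif_neg h2, dif_neg (show ¬ μ (FreeMonoid.ofList (w ++ [b])) ∈ P by
            rw [hmul]; exact h2)]
      · rw [dif_neg hw]
        have hnot : ¬ μ (FreeMonoid.ofList (w ++ [b])) ∈ P := by
          rintro ⟨r, hr⟩
          rw [hmul, mul_assoc] at hr
          exact hw ⟨μ (FreeMonoid.of b) * r, hr⟩
        rw [dif_neg hnot]
        rfl
  refine ⟨Option P, inferInstance, M, ?_⟩
  ext w
  rw [DFA.mem_accepts]
  have heval : M.eval w = M.evalFrom M.start w := rfl
  rw [heval, run w]
  constructor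
  · intro hacc
    by_cases h : μ (FreeMonoid.ofList w) ∈ P
    · rw [dif_pos h] at hacc
      have : some (⟨μ (FreeMonoid.ofList w), h⟩ : P) = some ⟨m, hm⟩ := hacc
      have := Option.some.inj this
      exact congrArg Subtype.val this
    · rw [dif_neg h] at hacc
      exact absurd hacc (by simp [M])
  · intro h
    have hPmem : μ (FreeMonoid.ofList w) ∈ P := by rw [h]; exact hm
    rw [dif_pos hPmem]
    show some _ = some _
    exact congrArg some (Subtype.ext h)
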